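/- arXiv:1111.4186 — 2 statements merged into one kernel-verified Lean document; each statement's English description precedes it below -/
import Mathlib

section
/- Let (R,m) be a one-dimensional Noetherian local ring and q=(x) a parameter ideal. Let l = min{ i : ((x^{n+1}):x^{n}) = ((x^{i+1}):x^{i}) for all n ≥ i } and x̃ = ((x^{l+1}):x^{l}). Then the first Hilbert coefficient satisfies e_1(q) = Σ_{i=0}^{l−1} ( λ_R(R/x̃) − λ_R(R/((x^{i+1}):x^{i})) ). -/
set_option synthInstance.maxHeartbeats 1000000
set_option maxHeartbeats 1000000

open IsLocalRing Polynomial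

/-- The length `λ_R(M)` of an `R`-module `M`, as an integer (the Krull dimension of
its lattice of submodules; for a finite-length module this is the usual length). -/
noncomputable def modLength (R M : Type*) [CommRing R] [AddCommGroup M] [Module R M] : ℤ :=
  ((Order.krullDim (Submodule R M)).unbotD 0).toNat

/-- The binomial coefficient `binom(x, k)` for `x : ℚ`, `k : ℕ`. -/
noncomputable def binomQ (x : ℚ) (k : ℕ) : ℚ :=
  (∏ j ∈ Finset.range k, (x - j)) / (Nat.factorial k)

/-- The function `n ↦ ∑_{i=0}^{d} (-1)^i eᵢ binom(n+d-i-1, d-i)`; when the `e i` are the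
Hilbert coefficients of an ideal this is its Hilbert–Samuel polynomial. -/
noncomputable def hilbPoly (d : ℕ) (e : ℕ → ℤ) (n : ℤ) : ℚ :=
  ∑ i ∈ Finset.range (d + 1), (-1 : ℚ) ^ i * (e i) * binomQ ((n : ℚ) + d - i - 1) (d - i)

/-- The Hilbert function `H_q(n) = λ_R(R/qⁿ)` (with `H_q(n) = 0` for `n ≤ 0`). -/
noncomputable def hilbFn (R : Type*) [CommRing R] (q : Ideal R) (n : ℤ) : ℚ :=
  (modLength R (R ⧸ q ^ n.toNat) : ℚ)

/-- The first difference operator `Δ` on functions `ℤ → ℚ`: `Δ(f)(n) = f(n+1) - f(n)`. -/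
noncomputable def deltaFn (f : ℤ → ℚ) : ℤ → ℚ := fun n => f (n + 1) - f n

/-- The colon ideal `((x^{i+1}) : x^i)`. -/
noncomputable def colonPow (R : Type*) [CommRing R] (x : R) (i : ℕ) : Ideal R :=
  (Ideal.span {x ^ (i + 1)}).colon (Ideal.span {x ^ i})

/-- The length `λ_R(J/I)` of the subquotient `J/I` (for ideals `I ⊆ J`). -/
noncomputable def quotLength (R : Type*) [CommRing R] (J I : Ideal R) : ℤ :=
  modLength R (↥J ⧸ Submodule.comap J.subtype I)

/-- `y` is a superficial element for `I`: there is `c ≥ 0` with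
`(I^{n+1} : y) ∩ I^c = I^n` for all `n ≥ c`. -/
def IsSuperficial (R : Type*) [CommRing R] (I : Ideal R) (y : R) : Prop :=
  ∃ c : ℕ, ∀ n ≥ c, (I ^ (n + 1)).colon (Ideal.span {y}) ⊓ I ^ c = I ^ n

/-- `q` is a parameter ideal of the `d`-dimensional local ring `R`: it is generated by a
system of `d` parameters, i.e. by `d` elements generating an `m`-primary ideal. -/
def IsParameterIdeal (R : Type*) [CommRing R] [IsLocalRing R] (d : ℕ) (q : Ideal R) : Prop :=
  (∃ f : Fin d → R, q = Ideal.span (Set.range f)) ∧ q.radical = maximalIdeal R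

/-- `depth R ≥ k`: there is an `R`-regular sequence of length `k` inside the maximal ideal. -/
def depthGE (R : Type*) [CommRing R] [IsLocalRing R] (k : ℕ) : Prop :=
  ∃ rs : List R, rs.length = k ∧ (∀ r ∈ rs, r ∈ maximalIdeal R) ∧
    RingTheory.Sequence.IsRegular R rs

/-- The ideal `I·R[It]` of the Rees algebra `R[It]`. -/
noncomputable def grKer (R : Type*) [CommRing R] (I : Ideal R) : Ideal (reesAlgebra I) :=
  Ideal.span {x : reesAlgebra I | ∃ a ∈ I, (x : R[X]) = Polynomial.C a}

/-- The associated graded ring `gr_I(R) = ⊕_{n≥0} Iⁿ/Iⁿ⁺¹`, realized as `R[It]/I·R[It]`. -/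
noncomputable abbrev grRing (R : Type*) [CommRing R] (I : Ideal R) :=
  reesAlgebra I ⧸ grKer R I

/-- The irrelevant ideal `gr_I(R)₊`, generated by the image `It` of the degree-one part. -/
noncomputable def grPlus (R : Type*) [CommRing R] (I : Ideal R) : Ideal (grRing R I) :=
  Ideal.span ((Ideal.Quotient.mk (grKer R I)) ''
    {x : reesAlgebra I | ∃ a ∈ I, (x : R[X]) = Polynomial.C a * Polynomial.X})

/-- `depth gr_I(R) = grade gr_I(R)₊ ≥ k`: there is a `gr_I(R)`-regular sequence of
length `k` contained in the irrelevant ideal. -/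
def grDepthGE (R : Type*) [CommRing R] (I : Ideal R) (k : ℕ) : Prop :=
  ∃ rs : List (grRing R I), rs.length = k ∧ (∀ r ∈ rs, r ∈ grPlus R I) ∧
    RingTheory.Sequence.IsRegular (grRing R I) rs




/-- The lattice `α` has longest chain length exactly `n`. -/
def LatLen (α : Type*) [Preorder α] (n : ℕ) : Prop :=
  (∀ p : LTSeries α, p.length ≤ n) ∧ ∃ p : LTSeries α, p.length = n

lemma latLen_krullDim {α : Type*} [Preorder α] {n : ℕ} (h : LatLen α n) :
    Order.krullDim α = ((n : ℕ∞) : WithBot ℕ∞) := by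
  obtain ⟨hub, p, hp⟩ := h
  have : Nonempty α := ⟨p.head⟩
  rw [Order.krullDim_eq_iSup_length]
  rw [show ((n : ℕ∞) : WithBot ℕ∞) = (((n:ℕ) : ℕ∞) : WithBot ℕ∞) from rfl]
  congr 1
  apply le_antisymm
  · exact iSup_le fun q => by exact_mod_cast hub q
  · exact le_iSup_of_le p (by rw [hp])

lemma LatLen.orderIso {α β : Type*} [Preorder α] [Preorder β] (f : α ≃o β) {n : ℕ}
    (h : LatLen α n) : LatLen β n := by
  refine ⟨fun p => ?_, ?_⟩
  · exact h.1 (p.map f.symm f.symm.strictMono)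
  · obtain ⟨p, hp⟩ := h.2
    exact ⟨p.map f f.strictMono, hp⟩

section split

variable {α : Type*} [Lattice α] [IsModularLattice α] (N : α)

lemma exists_split (p : LTSeries α) :
    ∃ (q : LTSeries {y : α // y ≤ N}) (r : LTSeries {y : α // N ≤ y}),
      p.length ≤ q.length + r.length ∧ (q.last : α) = p.last ⊓ N ∧ (r.last : α) = p.last ⊔ N := by
  suffices H : ∀ (m : ℕ) (p : LTSeries α), p.length = m →
      ∃ (q : LTSeries {y : α // y ≤ N}) (r : LTSeries {y : α // N ≤ y}),
        p.length ≤ q.length + r.length ∧ (q.last : α) = p.last ⊓ N ∧ (r.last : α) = p.last ⊔ N from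
    H p.length p rfl
  intro m
  induction m with
  | zero =>
    intro p hp
    exact ⟨RelSeries.singleton _ ⟨p.last ⊓ N, inf_le_right⟩,
      RelSeries.singleton _ ⟨p.last ⊔ N, le_sup_right⟩, by simp [hp], rfl, rfl⟩
  | succ m ih =>
    intro p hp
    have hne : p.length ≠ 0 := by omega
    have hlt : p.eraseLast.last < p.last := p.eraseLast_last_rel_last hne
    obtain ⟨q, r, hlen, hq, hr⟩ := ih p.eraseLast (by
      show p.length - 1 = m; omega)
    have hlen' : m ≤ q.length + r.length := by
      have : p.eraseLast.length = p.length - 1 := rfl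
      omega
    set a0 := p.eraseLast.last with ha0
    set a1 := p.last with ha1
    have hinf_le : a0 ⊓ N ≤ a1 ⊓ N := inf_le_inf_right _ hlt.le
    have hsup_le : a0 ⊔ N ≤ a1 ⊔ N := sup_le_sup_right hlt.le _
    rcases eq_or_lt_of_le hinf_le with hinf | hinf
    · have hsup : a0 ⊔ N < a1 ⊔ N := sup_lt_sup_of_lt_of_inf_le_inf hlt hinf.ge
      refine ⟨q, r.snoc ⟨a1 ⊔ N, le_sup_right⟩ (Subtype.coe_lt_coe.mp (by rw [hr]; exact hsup)),
        ?_, ?_, ?_⟩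
      · show p.length ≤ q.length + (r.length + 1); omega
      · rw [hq, hinf]
      · rw [RelSeries.last_snoc]
    · rcases eq_or_lt_of_le hsup_le with hsup | hsup
      · refine ⟨q.snoc ⟨a1 ⊓ N, inf_le_right⟩ (Subtype.coe_lt_coe.mp (by rw [hq]; exact hinf)),
          r, ?_, ?_, ?_⟩
        · show p.length ≤ (q.length + 1) + r.length; omega
        · rw [RelSeries.last_snoc]
        · rw [hr, hsup]
      · refine ⟨q.snoc ⟨a1 ⊓ N, inf_le_right⟩ (Subtype.coe_lt_coe.mp (by rw [hq]; exact hinf)),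
          r.snoc ⟨a1 ⊔ N, le_sup_right⟩ (Subtype.coe_lt_coe.mp (by rw [hr]; exact hsup)),
          ?_, ?_, ?_⟩
        · show p.length ≤ (q.length + 1) + (r.length + 1); omega
        · rw [RelSeries.last_snoc]
        · rw [RelSeries.last_snoc]

lemma latLen_split {a b : ℕ} (ha : LatLen {y : α // y ≤ N} a) (hb : LatLen {y : α // N ≤ y} b) :
    LatLen α (a + b) := by
  constructor
  · intro p
    obtain ⟨q, r, hlen, -, -⟩ := exists_split N p
    exact hlen.trans (add_le_add (ha.1 q) (hb.1 r))
  · obtain ⟨q, hq⟩ := ha.2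
    obtain ⟨r, hr⟩ := hb.2
    have hqlast : (q.last : α) = N := by
      rcases eq_or_lt_of_le q.last.2 with h | h
      · exact h
      · have hlt : q.last < ⟨N, le_refl N⟩ := Subtype.coe_lt_coe.mp h
        have := ha.1 (q.snoc ⟨N, le_refl N⟩ hlt)
        have hsl : (q.snoc ⟨N, le_refl N⟩ hlt).length = q.length + 1 := rfl
        omega
    have hrhead : (r.head : α) = N := by
      rcases eq_or_lt_of_le r.head.2 with h | h
      · exact h.symm
      · have hlt : (⟨N, le_refl N⟩ : {y : α // N ≤ y}) < r.head := Subtype.coe_lt_coe.mp h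
        have := hb.1 (r.cons ⟨N, le_refl N⟩ hlt)
        have hsl : (r.cons ⟨N, le_refl N⟩ hlt).length = 0 + r.length + 1 := rfl
        omega
    refine ⟨RelSeries.smash (q.map Subtype.val (Subtype.strictMono_coe _))
      (r.map Subtype.val (Subtype.strictMono_coe _)) ?_, ?_⟩
    · rw [LTSeries.last_map, LTSeries.head_map, hqlast, hrhead]
    · show (q.map _ _).length + (r.map _ _).length = a + b
      have h1 : (q.map Subtype.val (Subtype.strictMono_coe _)).length = q.length := rfl
      have h2 : (r.map Subtype.val (Subtype.strictMono_coe _)).length = r.length := rfl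
      omega

end split


section modules

universe u
variable {R : Type*} [Ring R]

lemma latLen_subsingleton (M : Type u) [AddCommGroup M] [Module R M] [Subsingleton M] :
    LatLen (Submodule R M) 0 := by
  have hs : ∀ P Q : Submodule R M, P = Q := by
    intro P Q
    ext y
    have h0 : y = 0 := Subsingleton.elim _ _
    simp [h0]
  constructor
  · intro p
    by_contra h
    have h1 : 0 < p.length := by omega
    have := p.step ⟨0, h1⟩
    exact this.ne (hs _ _)
  · exact ⟨RelSeries.singleton _ ⊥, rfl⟩

lemma latLen_simple (M : Type u) [AddCommGroup M] [Module R M] [IsSimpleModule R M] :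
    LatLen (Submodule R M) 1 := by
  constructor
  · intro p
    by_contra h
    push_neg at h
    have h2 : 2 ≤ p.length := h
    have l01 : p ⟨0, by omega⟩ < p ⟨1, by omega⟩ := p.strictMono (by simp [Fin.lt_def])
    have l12 : p ⟨1, by omega⟩ < p ⟨2, by omega⟩ := p.strictMono (by simp [Fin.lt_def])
    rcases eq_bot_or_eq_top (p ⟨1, by omega⟩) with h1 | h1
    · rw [h1] at l01; exact (not_lt_bot l01)
    · rw [h1] at l12; exact (not_top_lt l12)
  · refine ⟨(RelSeries.singleton _ ⊥).snoc ⊤ (by exact (bot_lt_top : (⊥ : Submodule R M) < ⊤)), rfl⟩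

lemma latLen_sub_quot {M : Type u} [AddCommGroup M] [Module R M] (N : Submodule R M) {a b : ℕ}
    (ha : LatLen (Submodule R ↥N) a) (hb : LatLen (Submodule R (M ⧸ N)) b) :
    LatLen (Submodule R M) (a + b) :=
  latLen_split N (ha.orderIso (Submodule.MapSubtype.orderIso N))
    (hb.orderIso (Submodule.comapMkQRelIso N))

lemma exists_latLen {M : Type u} [AddCommGroup M] [Module R M]
    (h : IsFiniteLength R M) : ∃ n, LatLen (Submodule R M) n := by
  induction h with
  | of_subsingleton => exact ⟨0, latLen_subsingleton _⟩
  | @of_simple_quotient M _ _ N _ hN ih =>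
    obtain ⟨a, ha⟩ := ih
    exact ⟨a + 1, latLen_sub_quot N ha (latLen_simple _)⟩

end modules

section modlength

variable {R : Type*} [CommRing R]

lemma modLength_eq {M : Type*} [AddCommGroup M] [Module R M] {n : ℕ}
    (h : LatLen (Submodule R M) n) : modLength R M = n := by
  rw [modLength, latLen_krullDim h]
  simp

lemma modLength_congr {M M₂ : Type*} [AddCommGroup M] [Module R M] [AddCommGroup M₂]
    [Module R M₂] (e : M ≃ₗ[R] M₂) : modLength R M = modLength R M₂ := by
  rw [modLength, modLength, Order.krullDim_eq_of_orderIso (Submodule.orderIsoMapComap e)]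

lemma modLength_additive {M : Type*} [AddCommGroup M] [Module R M]
    [IsNoetherian R M] [IsArtinian R M] (N : Submodule R M) :
    modLength R M = modLength R ↥N + modLength R (M ⧸ N) := by
  have hN : IsFiniteLength R ↥N :=
    isFiniteLength_iff_isNoetherian_isArtinian.mpr ⟨inferInstance, inferInstance⟩
  have hQ : IsFiniteLength R (M ⧸ N) :=
    isFiniteLength_iff_isNoetherian_isArtinian.mpr ⟨inferInstance, inferInstance⟩
  obtain ⟨a, ha⟩ := exists_latLen hN
  obtain ⟨b, hb⟩ := exists_latLen hQ
  rw [modLength_eq (latLen_sub_quot N ha hb), modLength_eq ha, modLength_eq hb]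
  push_cast
  ring

lemma modLength_subsingleton {M : Type*} [AddCommGroup M] [Module R M] [Subsingleton M] :
    modLength R M = 0 := by
  simpa using modLength_eq (latLen_subsingleton M)

end modlength

section artinian

variable {R : Type*} [CommRing R]

lemma isArtinian_restrict {S M : Type*} [Ring S] [Algebra R S]
    (hsurj : Function.Surjective (algebraMap R S)) [AddCommGroup M] [Module S M] [Module R M]
    [IsScalarTower R S M] (hart : IsArtinian S M) : IsArtinian R M := by
  let f : Submodule R M → Submodule S M := fun N =>
    { carrier := N
      add_mem' := fun h1 h2 => N.add_mem h1 h2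
      zero_mem' := N.zero_mem
      smul_mem' := fun c x hx => by
        obtain ⟨r, rfl⟩ := hsurj c
        rw [algebraMap_smul]
        exact N.smul_mem r hx }
  have hle : ∀ P Q : Submodule R M, f P ≤ f Q ↔ P ≤ Q := fun _ _ => Iff.rfl
  let emb : Submodule R M ↪o Submodule S M :=
    { toFun := f
      inj' := fun P Q h => by
        apply SetLike.coe_injective
        have : (f P : Set M) = (f Q : Set M) := by rw [h]
        exact this
      map_rel_iff' := hle _ _ }
  exact ⟨emb.wellFounded hart.wf⟩

lemma isArtinian_of_torsion_fg (I : Ideal R) (hI : I.IsMaximal) {M : Type*} [AddCommGroup M]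
    [Module R M] [Module.Finite R M] (htor : Module.IsTorsionBySet R M I) :
    IsArtinian R M := by
  letI : Module (R ⧸ I) M := htor.module
  haveI : IsScalarTower R (R ⧸ I) M := htor.isScalarTower
  letI : Field (R ⧸ I) := Ideal.Quotient.field I
  have hfin : Module.Finite (R ⧸ I) M := Module.Finite.of_restrictScalars_finite R (R ⧸ I) M
  have hart : IsArtinian (R ⧸ I) M := isArtinian_of_fg_of_artinian'
  refine isArtinian_restrict ?_ hart
  rw [Ideal.Quotient.algebraMap_eq]
  exact Ideal.Quotient.mk_surjective

variable [IsNoetherianRing R] [IsLocalRing R]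

open IsLocalRing in
lemma isArtinian_quot_maxpow (k : ℕ) :
    IsArtinian R (R ⧸ (maximalIdeal R ^ k : Ideal R)) := by
  induction k with
  | zero =>
    have : Subsingleton (R ⧸ (maximalIdeal R ^ 0 : Ideal R)) := by
      rw [pow_zero, Ideal.one_eq_top]
      exact Submodule.Quotient.subsingleton_iff.mpr rfl
    infer_instance
  | succ k ih =>
    set I : Ideal R := maximalIdeal R ^ (k + 1) with hIdef
    set J : Ideal R := maximalIdeal R ^ k with hJdef
    have hIJ : I ≤ J := Ideal.pow_le_pow_right (Nat.le_succ k)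
    set N : Submodule R (R ⧸ I) := Submodule.map I.mkQ J with hNdef
    have hquot : IsArtinian R ((R ⧸ I) ⧸ N) :=
      isArtinian_of_linearEquiv (Submodule.quotientQuotientEquivQuotient I J hIJ).symm
    have hsub : IsArtinian R ↥N := by
      have hfg : Module.Finite R ↥N := Module.Finite.iff_fg.mpr (IsNoetherian.noetherian N)
      apply isArtinian_of_torsion_fg (maximalIdeal R) (maximalIdeal.isMaximal R)
      rintro ⟨y, hy⟩ r
      obtain ⟨z, hz, rfl⟩ := Submodule.mem_map.mp hy
      apply Subtype.ext
      show (r : R) • (I.mkQ z) = 0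
      rw [← map_smul, Submodule.mkQ_apply, Submodule.Quotient.mk_eq_zero]
      have hcomm : (r : R) • z = z * (r : R) := by rw [smul_eq_mul, mul_comm]
      rw [hcomm, hIdef, pow_succ]
      exact Ideal.mul_mem_mul hz r.2
    exact (isArtinian_iff_submodule_quotient N).mpr ⟨hsub, hquot⟩

end artinian


section ringpart

open IsLocalRing

variable {R : Type*} [CommRing R] [IsNoetherianRing R] [IsLocalRing R]

lemma isArtinian_quot_primary (J : Ideal R) (hJ : maximalIdeal R ≤ J.radical) :
    IsArtinian R (R ⧸ J) := by
  obtain ⟨k, hk⟩ := Ideal.exists_pow_le_of_le_radical_of_fg hJ (IsNoetherian.noetherian _)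
  haveI : IsArtinian R (R ⧸ (maximalIdeal R ^ k : Ideal R)) := isArtinian_quot_maxpow k
  refine isArtinian_of_surjective _
    (Submodule.mapQ (maximalIdeal R ^ k) J LinearMap.id (by simpa using hk)) ?_
  intro y
  obtain ⟨z, rfl⟩ := Submodule.mkQ_surjective J y
  exact ⟨Submodule.Quotient.mk z, by rw [Submodule.mapQ_apply]; rfl⟩

lemma key_step (x : R) (hx : (Ideal.span {x}).radical = maximalIdeal R) (n : ℕ) :
    modLength R (R ⧸ (Ideal.span {x} ^ (n + 1) : Ideal R)) =
      modLength R (R ⧸ (Ideal.span {x} ^ n : Ideal R)) + modLength R (R ⧸ colonPow R x n) := by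
  set I : Ideal R := Ideal.span {x} ^ (n + 1) with hIdef
  set J : Ideal R := Ideal.span {x} ^ n with hJdef
  haveI hartI : IsArtinian R (R ⧸ I) := isArtinian_quot_primary _ (by
    show maximalIdeal R ≤ (Ideal.span {x} ^ (n + 1)).radical
    rw [Ideal.radical_pow _ (show n + 1 ≠ 0 by omega), hx])
  have hIJ : I ≤ J := Ideal.pow_le_pow_right (Nat.le_succ n)
  set N : Submodule R (R ⧸ I) := Submodule.map I.mkQ J with hNdef
  have e1 : ((R ⧸ I) ⧸ N) ≃ₗ[R] R ⧸ J := Submodule.quotientQuotientEquivQuotient I J hIJ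
  let f : R →ₗ[R] R ⧸ I := I.mkQ ∘ₗ LinearMap.toSpanSingleton R R (x ^ n)
  have hker : LinearMap.ker f = colonPow R x n := by
    ext r
    rw [LinearMap.mem_ker]
    show I.mkQ (r • x ^ n) = 0 ↔ _
    rw [Submodule.mkQ_apply, Submodule.Quotient.mk_eq_zero, colonPow,
      Ideal.mem_colon_span_singleton, smul_eq_mul, hIdef, Ideal.span_singleton_pow]
  have hrange : LinearMap.range f = N := by
    show LinearMap.range (I.mkQ ∘ₗ LinearMap.toSpanSingleton R R (x ^ n)) = N
    rw [LinearMap.range_comp]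
    rw [hNdef, hJdef]
    congr 1
    rw [← LinearMap.span_singleton_eq_range, Ideal.span_singleton_pow]
  have e2 : (R ⧸ colonPow R x n) ≃ₗ[R] ↥N := by
    have e := f.quotKerEquivRange
    rw [hker, hrange] at e
    exact e
  rw [modLength_additive N, ← modLength_congr e2, modLength_congr e1, add_comm]

end ringpart

lemma hilbPoly_one_eval (e : ℕ → ℤ) (n : ℤ) : hilbPoly 1 e n = e 0 * n - e 1 := by
  simp [hilbPoly, binomQ, Finset.sum_range_succ]
  ring

/-- In a one-dimensional Noetherian local ring with parameter ideal `q = (x)`,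
with `l` and `x̃` as above, the first Hilbert coefficient satisfies
`e₁(q) = ∑_{i=0}^{l-1} (λ_R(R/x̃) - λ_R(R/((x^{i+1}):x^i)))`. -/
theorem stmt1 (R : Type*) [CommRing R] [IsNoetherianRing R] [IsLocalRing R]
    (hdim : ringKrullDim R = 1) (x : R)
    (hx : (Ideal.span {x}).radical = maximalIdeal R)
    (l : ℕ) (hl : IsLeast {i : ℕ | ∀ n ≥ i, colonPow R x n = colonPow R x i} l)
    (e : ℕ → ℤ)
    (he : ∃ N : ℤ, ∀ n ≥ N, hilbPoly 1 e n = hilbFn R (Ideal.span {x}) n) :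
    e 1 = ∑ i ∈ Finset.range l,
      (modLength R (R ⧸ colonPow R x l) - modLength R (R ⧸ colonPow R x i)) := by
  obtain ⟨N₀, hN⟩ := he
  set L : ℕ → ℤ := fun i => modLength R (R ⧸ colonPow R x i) with hLdef
  have key : ∀ n : ℕ, modLength R (R ⧸ (Ideal.span {x} ^ (n + 1) : Ideal R)) =
      modLength R (R ⧸ (Ideal.span {x} ^ n : Ideal R)) + L n := key_step x hx
  have H0 : modLength R (R ⧸ (Ideal.span {x} ^ 0 : Ideal R)) = 0 := by
    haveI : Subsingleton (R ⧸ (Ideal.span {x} ^ 0 : Ideal R)) := by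
      rw [pow_zero, Ideal.one_eq_top]
      exact Submodule.Quotient.subsingleton_iff.mpr rfl
    exact modLength_subsingleton
  have Hsum : ∀ n : ℕ, modLength R (R ⧸ (Ideal.span {x} ^ n : Ideal R)) =
      ∑ i ∈ Finset.range n, L i := by
    intro n
    induction n with
    | zero => simpa using H0
    | succ n ih => rw [key n, ih, Finset.sum_range_succ]
  have hLconst : ∀ i : ℕ, l ≤ i → L i = L l := fun i hi => by
    simp only [hLdef]; rw [hl.1 i hi]
  have hsum2 : ∀ d : ℕ, ∑ i ∈ Finset.range (l + d), L i =
      (∑ i ∈ Finset.range l, L i) + d * L l := by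
    intro d
    induction d with
    | zero => simp
    | succ d ih =>
      rw [show l + (d + 1) = (l + d) + 1 from rfl, Finset.sum_range_succ, ih,
        hLconst (l + d) (by omega)]
      push_cast
      ring
  have hf : ∀ n : ℕ, hilbFn R (Ideal.span {x}) (n : ℤ) =
      ((∑ i ∈ Finset.range n, L i : ℤ) : ℚ) := by
    intro n
    simp only [hilbFn, Int.toNat_natCast]
    rw [Hsum]
  obtain ⟨t, htN, htl⟩ : ∃ t : ℕ, N₀ ≤ (t : ℤ) ∧ l ≤ t :=
    ⟨max N₀.toNat l, le_trans (Int.self_le_toNat N₀)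
      (by exact_mod_cast le_max_left _ _), le_max_right _ _⟩
  obtain ⟨d, rfl⟩ : ∃ d, t = l + d := ⟨t - l, by omega⟩
  have h1 := hN ((l + d : ℕ) : ℤ) htN
  have h2 := hN ((l + d + 1 : ℕ) : ℤ) (by push_cast at htN ⊢; omega)
  rw [hilbPoly_one_eval, hf (l + d), hsum2 d] at h1
  rw [hilbPoly_one_eval, hf (l + d + 1),
    show l + d + 1 = l + (d + 1) from rfl, hsum2 (d + 1)] at h2
  set Sl : ℤ := ∑ i ∈ Finset.range l, L i with hSldef
  have he0 : (e 0 : ℚ) = (L l : ℚ) := by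
    push_cast at h1 h2
    ring_nf at h1 h2
    linarith
  have he1 : (e 1 : ℚ) = (l : ℚ) * (L l : ℚ) - (Sl : ℚ) := by
    rw [he0] at h1
    push_cast at h1
    ring_nf at h1 ⊢
    linarith
  have goalQ : (e 1 : ℚ) = ((∑ i ∈ Finset.range l, (L l - L i) : ℤ) : ℚ) := by
    rw [he1]
    push_cast
    rw [Finset.sum_sub_distrib, Finset.sum_const, Finset.card_range, nsmul_eq_mul]
    rw [hSldef]
    push_cast
    ring
  exact_mod_cast goalQ
end

section
/- Let (R,m) be a Noetherian local ring of dimension d and q a parameter ideal. For 0 ≤ i ≤ d−1: if the postulation number satisfies n(q) < i−d, then e_j(q) = 0 for all j with i ≤ j ≤ d. -/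
set_option synthInstance.maxHeartbeats 1000000
set_option maxHeartbeats 1000000

open IsLocalRing Polynomial

lemma hilbFn_nonpos (R : Type*) [CommRing R] (q : Ideal R) (n : ℤ) (hn : n ≤ 0) :
    hilbFn R q n = 0 := by
  unfold hilbFn modLength
  have htop : q ^ n.toNat = ⊤ := by
    rw [Int.toNat_of_nonpos hn, pow_zero, Ideal.one_eq_top]
  have hsub : Subsingleton (R ⧸ q ^ n.toNat) := by
    rw [htop]; exact Ideal.Quotient.subsingleton_iff.mpr rfl
  have hsub2 : Subsingleton (Submodule R (R ⧸ q ^ n.toNat)) := inferInstance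
  have hk := Order.krullDim_nonpos_of_subsingleton (α := Submodule R (R ⧸ q ^ n.toNat))
  rcases hx : Order.krullDim (Submodule R (R ⧸ q ^ n.toNat)) with _ | a
  · rfl
  · rw [hx] at hk
    have ha0 : a ≤ 0 := WithBot.coe_le_coe.mp hk
    have ha : a = 0 := le_antisymm ha0 zero_le
    rw [ha]
    rfl

lemma binomQ_neg_one (r : ℕ) : binomQ (-1) r = (-1) ^ r := by
  unfold binomQ
  have hp : (∏ j ∈ Finset.range r, ((-1 : ℚ) - j)) = (-1) ^ r * r.factorial := by
    induction r with
    | zero => simp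
    | succ n ih => rw [Finset.prod_range_succ, ih, Nat.factorial_succ]; push_cast; ring
  rw [hp]
  have : (r.factorial : ℚ) ≠ 0 := by exact_mod_cast r.factorial_ne_zero
  field_simp

lemma binomQ_nat_lt (t r : ℕ) (h : t < r) : binomQ (t : ℚ) r = 0 := by
  unfold binomQ
  rw [Finset.prod_eq_zero (Finset.mem_range.mpr h) (by simp)]
  simp

lemma key_vanish (d : ℕ) (e : ℕ → ℤ) (j : ℕ) (hj : j ≤ d)
    (hz : ∀ i', j < i' → i' ≤ d → e i' = 0)
    (hpoly : hilbPoly d e ((j : ℤ) - d) = 0) : e j = 0 := by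
  unfold hilbPoly at hpoly
  rw [Finset.sum_eq_single j] at hpoly
  · have harg : (((j : ℤ) - d : ℤ) : ℚ) + d - j - 1 = -1 := by push_cast; ring
    rw [harg, binomQ_neg_one] at hpoly
    rcases mul_eq_zero.mp hpoly with h1 | h2
    · rcases mul_eq_zero.mp h1 with h3 | h4
      · exact absurd h3 (pow_ne_zero _ (by norm_num))
      · exact_mod_cast h4
    · exact absurd h2 (pow_ne_zero _ (by norm_num))
  · intro i' hmem hne
    have hi'd : i' ≤ d := by
      have := Finset.mem_range.mp hmem; omega
    rcases lt_or_gt_of_ne hne with hlt | hgt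
    · have hle : i' + 1 ≤ j := hlt
      have hc : ((j - (i' + 1) : ℕ) : ℚ) = (j : ℚ) - ((i' + 1 : ℕ) : ℚ) :=
        Nat.cast_sub hle
      have harg : (((j : ℤ) - d : ℤ) : ℚ) + d - i' - 1 = ((j - (i' + 1) : ℕ) : ℚ) := by
        rw [hc]; push_cast; ring
      rw [harg, binomQ_nat_lt _ _ (by omega), mul_zero]
    · rw [hz i' hgt hi'd]; push_cast; ring
  · intro hj'
    exact absurd (Finset.mem_range.mpr (by omega)) hj'

/-- Let `R` be a Noetherian local ring of dimension `d` and `q` a parameter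
ideal.  For `0 ≤ i ≤ d-1`: if the postulation number satisfies `n(q) < i - d`, then
`e_j(q) = 0` for all `i ≤ j ≤ d`. -/
theorem stmt15 (R : Type*) [CommRing R] [IsNoetherianRing R] [IsLocalRing R]
    (d : ℕ) (hdim : ringKrullDim R = d)
    (q : Ideal R) (hq : IsParameterIdeal R d q)
    (e : ℕ → ℤ) (he : ∃ N : ℤ, ∀ n ≥ N, hilbPoly d e n = hilbFn R q n)
    (npq : ℤ)
    (hnpq : IsLeast {j : ℤ | ∀ n > j, hilbFn R q n = hilbPoly d e n} npq)
    (i : ℕ) (hi : i ≤ d - 1)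
    (h : npq < (i : ℤ) - d) :
    ∀ j, i ≤ j → j ≤ d → e j = 0 := by
  intro j hij hjd
  have main : ∀ k j, i ≤ j → j ≤ d → d - j = k → e j = 0 := by
    intro k
    induction k using Nat.strong_induction_on with
    | _ k IH =>
      intro j hij hjd hk
      apply key_vanish d e j hjd
      · intro i' hlt hle
        exact IH (d - i') (by omega) i' (by omega) hle rfl
      · have hcast : (i : ℤ) ≤ (j : ℤ) := by exact_mod_cast hij
        have h0 : ((j : ℤ) - d) > npq := by linarith
        have heq := hnpq.1 _ h0
        rw [← heq]
        apply hilbFn_nonpos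
        have : (j : ℤ) ≤ (d : ℤ) := by exact_mod_cast hjd
        linarith
  exact main (d - j) j hij hjd rfl
end
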